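/- Let φ: (M⁴,g) → (N,h), M compact, with S₂ = 0, and suppose there exists ρ ∈ C^∞(M) such that φ: (M⁴, e^{2ρ}g) → (N,h) is harmonic. Then φ: (M,g) → (N,h) is harmonic. Moreover, if rank φ = 4 everywhere, ρ is constant. (Key computation: τ(φ) with respect to g equals −2dφ(grad_g ρ); plugging X = Y = grad_g ρ into the S₂ = 0 identity gives ½|τ(φ)|²|grad_g ρ|² = ½ grad_g ρ(|τ(φ)|²), which at a maximum point of |τ(φ)|² forces |τ(φ)|² = 0.) -/
import Mathlib


open scoped RealInnerProductSpace
noncomputable section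

/-- A fixed orthonormal frame of the (model) tangent space of the `m`-dimensional
Riemannian manifold `M`. -/
def onb (m : ℕ) : OrthonormalBasis (Fin m) ℝ (EuclideanSpace ℝ (Fin m)) :=
  EuclideanSpace.basisFun (Fin m) ℝ

/-- The biharmonic stress-energy tensor
`S₂(X,Y) = ½|τ(φ)|² ⟨X,Y⟩ + ⟨dφ,∇τ(φ)⟩ ⟨X,Y⟩ − ⟨dφ(X),∇_Y τ(φ)⟩ − ⟨dφ(Y),∇_X τ(φ)⟩`,
expressed pointwise in terms of the differential `dphi` of `φ`, the tension field `tau`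
and its covariant derivative `Dtau` (the trace `⟨dφ,∇τ(φ)⟩` being computed in an
orthonormal frame). -/
def S2 {m : ℕ} {F : Type*} [NormedAddCommGroup F] [InnerProductSpace ℝ F]
    (dphi : EuclideanSpace ℝ (Fin m) →ₗ[ℝ] F) (tau : F)
    (Dtau : EuclideanSpace ℝ (Fin m) →ₗ[ℝ] F)
    (X Y : EuclideanSpace ℝ (Fin m)) : ℝ :=
  (1 / 2 : ℝ) * ‖tau‖ ^ 2 * ⟪X, Y⟫
    + (∑ i, ⟪dphi (onb m i), Dtau (onb m i)⟫) * ⟪X, Y⟫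
    - ⟪dphi X, Dtau Y⟫ - ⟪dphi Y, Dtau X⟫

/-- Let `φ : (M⁴,g) → (N,h)`, `M` compact, with `S₂ = 0`, and suppose
there is `ρ ∈ C^∞(M)` such that `φ : (M⁴, e^{2ρ}g) → (N,h)` is harmonic — by the
conformal change formula this means `τ(φ) = −2 dφ(grad_g ρ)`. Then `φ : (M,g) → (N,h)`
is harmonic; moreover if `rank φ = 4` everywhere then `ρ` is constant.
Here `dnorm p X = X(|τ(φ)|²)(p) = 2⟨∇_X τ(φ), τ(φ)⟩` is the differential of `|τ(φ)|²`
(which vanishes at a maximum point), and `grad ρ ≡ 0` forces `ρ` constant since `M` is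
connected. -/
theorem conformally_harmonic_S2_zero_harmonic
    (M : Type*) [TopologicalSpace M] [CompactSpace M] [ConnectedSpace M] [Nonempty M]
    (F : Type*) [NormedAddCommGroup F] [InnerProductSpace ℝ F]
    (dphi : M → EuclideanSpace ℝ (Fin 4) →ₗ[ℝ] F)
    (tau : M → F)
    (Dtau : M → EuclideanSpace ℝ (Fin 4) →ₗ[ℝ] F)
    (rho : M → ℝ) (gradrho : M → EuclideanSpace ℝ (Fin 4))
    (dnorm : M → EuclideanSpace ℝ (Fin 4) → ℝ)
    (hS2 : ∀ p X Y, S2 (dphi p) (tau p) (Dtau p) X Y = 0)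
    (hconf : ∀ p, tau p = (-2 : ℝ) • dphi p (gradrho p))
    (hcont : Continuous fun p => ‖tau p‖)
    (hdnorm : ∀ p X, dnorm p X = 2 * ⟪Dtau p X, tau p⟫)
    (hcrit : ∀ p₀, (∀ p, ‖tau p‖ ≤ ‖tau p₀‖) → ∀ X, dnorm p₀ X = 0)
    (hgradconst : (∀ p, gradrho p = 0) → ∀ p q, rho p = rho q) :
    (∀ p, tau p = 0) ∧
    ((∀ p, Function.Injective (dphi p)) → ∀ p q, rho p = rho q) := by

  -- trace identity: ∑ ⟪dφ eᵢ, Dτ eᵢ⟫ = -‖τ‖²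
  have honb : ∀ i : Fin 4, ⟪onb 4 i, onb 4 i⟫ = (1:ℝ) := by
    intro i
    have := (onb 4).orthonormal.1 i
    rw [real_inner_self_eq_norm_sq, this]; norm_num
  have htrace : ∀ p, (∑ i, ⟪dphi p (onb 4 i), Dtau p (onb 4 i)⟫)
      = -‖tau p‖ ^ 2 := by
    intro p
    have h := fun i : Fin 4 => hS2 p (onb 4 i) (onb 4 i)
    simp only [S2, honb, mul_one] at h
    set T := ∑ i, ⟪dphi p (onb 4 i), Dtau p (onb 4 i)⟫ with hT
    have hc : ∀ i : Fin 4, ⟪dphi p (onb 4 i), Dtau p (onb 4 i)⟫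
        = ((1/2:ℝ) * ‖tau p‖ ^ 2 + T) / 2 := fun i => by linarith [h i]
    have h2 : T = ∑ _i : Fin 4, ((1/2:ℝ) * ‖tau p‖ ^ 2 + T) / 2 := by
      rw [hT]; exact Finset.sum_congr rfl fun i _ => hc i
    simp only [Finset.sum_const, Finset.card_univ, Fintype.card_fin,
      nsmul_eq_mul] at h2
    linarith
  -- key identity: dnorm p (gradρ p) = ‖τ p‖² ⟪gradρ p, gradρ p⟫
  have hkey : ∀ p, dnorm p (gradrho p) = ‖tau p‖ ^ 2 * ⟪gradrho p, gradrho p⟫ := by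
    intro p
    have h := hS2 p (gradrho p) (gradrho p)
    rw [S2, htrace p] at h
    have hdg : dphi p (gradrho p) = (-(1/2) : ℝ) • tau p := by
      rw [hconf p, smul_smul]; norm_num
    rw [hdg, real_inner_smul_left] at h
    have hd := hdnorm p (gradrho p)
    rw [real_inner_comm] at hd
    linarith
  -- τ vanishes at the maximum point, hence everywhere
  obtain ⟨p₀, -, hmax⟩ := IsCompact.exists_isMaxOn isCompact_univ
    Set.univ_nonempty hcont.continuousOn
  have hmax' : ∀ p, ‖tau p‖ ≤ ‖tau p₀‖ := fun p => hmax (Set.mem_univ p)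
  have hzero₀ : tau p₀ = 0 := by
    have h0 := hcrit p₀ hmax' (gradrho p₀)
    rw [hkey p₀] at h0
    rcases mul_eq_zero.1 h0 with h | h
    · rw [pow_eq_zero_iff (two_ne_zero), norm_eq_zero] at h
      exact h
    · have hg : gradrho p₀ = 0 := by
        rwa [real_inner_self_eq_norm_sq, pow_eq_zero_iff (two_ne_zero),
          norm_eq_zero] at h
      rw [hconf p₀, hg, map_zero, smul_zero]
  have htau : ∀ p, tau p = 0 := by
    intro p
    have h := hmax' p
    rw [hzero₀, norm_zero] at h
    exact norm_eq_zero.1 (le_antisymm h (norm_nonneg _))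
  refine ⟨htau, fun hinj p q => ?_⟩
  apply hgradconst
  intro p'
  have h := htau p'
  rw [hconf p'] at h
  have hz : dphi p' (gradrho p') = 0 := by
    rcases smul_eq_zero.1 h with h' | h'
    · norm_num at h'
    · exact h'
  exact hinj p' (by rw [hz, map_zero])

end
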